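/- Let Θ be a convex bounded subset of the open positive orthant in R^d. The dual norm of the Θ-norm ‖w‖_Θ = sqrt(inf_{θ∈Θ} Σ_i w_i²/θ_i) is given by ‖u‖_{*,Θ} = sqrt(sup_{θ∈Θ} Σ_i θ_i u_i²). -/

import Mathlib

noncomputable def thetaNorm {d : ℕ} (Θ : Set (Fin d → ℝ)) (w : Fin d → ℝ) : ℝ :=
  Real.sqrt (⨅ θ : Θ, ∑ i, w i ^ 2 / (θ : Fin d → ℝ) i)

theorem theta_dual_norm {d : ℕ} (Θ : Set (Fin d → ℝ)) (hne : Θ.Nonempty)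
    (hconv : Convex ℝ Θ) (hbdd : Bornology.IsBounded Θ)
    (hpos : ∀ θ ∈ Θ, ∀ i, 0 < θ i) (u : Fin d → ℝ) :
    sSup {x : ℝ | ∃ w : Fin d → ℝ, thetaNorm Θ w ≤ 1 ∧ x = ∑ i, u i * w i} =
      Real.sqrt (⨆ θ : Θ, ∑ i, (θ : Fin d → ℝ) i * u i ^ 2) := by
  haveI : Nonempty Θ := hne.to_subtype
  set f : Θ → ℝ := fun θ => ∑ i, (θ : Fin d → ℝ) i * u i ^ 2 with hf
  set M : ℝ := ⨆ θ : Θ, f θ with hM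
  -- f is bounded above
  obtain ⟨C, hC⟩ := hbdd.exists_norm_le
  have hfub : ∀ θ : Θ, f θ ≤ C * ∑ i, u i ^ 2 := by
    intro θ
    rw [Finset.mul_sum]
    refine Finset.sum_le_sum fun i _ => ?_
    have h1 : (θ : Fin d → ℝ) i ≤ C := by
      calc (θ : Fin d → ℝ) i ≤ ‖(θ : Fin d → ℝ) i‖ := le_abs_self _
        _ ≤ ‖(θ : Fin d → ℝ)‖ := norm_le_pi_norm _ i
        _ ≤ C := hC _ θ.2
    exact mul_le_mul_of_nonneg_right h1 (sq_nonneg _)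
  have hfbdd : BddAbove (Set.range f) := ⟨C * ∑ i, u i ^ 2, by
    rintro _ ⟨θ, rfl⟩; exact hfub θ⟩
  have hfnn : ∀ θ : Θ, 0 ≤ f θ := fun θ =>
    Finset.sum_nonneg fun i _ => mul_nonneg (hpos _ θ.2 i).le (sq_nonneg _)
  have hMnn : 0 ≤ M := le_trans (hfnn (Classical.arbitrary Θ))
    (le_ciSup hfbdd (Classical.arbitrary Θ))
  -- lower bound for infima
  have hgbdd : ∀ w : Fin d → ℝ, BddBelow (Set.range fun θ : Θ =>
      ∑ i, w i ^ 2 / (θ : Fin d → ℝ) i) := by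
    intro w
    refine ⟨0, ?_⟩
    rintro _ ⟨θ, rfl⟩
    exact Finset.sum_nonneg fun i _ => div_nonneg (sq_nonneg _) (hpos _ θ.2 i).le
  -- 0 is in the set
  have h0mem : (0 : ℝ) ∈ {x : ℝ | ∃ w : Fin d → ℝ, thetaNorm Θ w ≤ 1 ∧ x = ∑ i, u i * w i} := by
    refine ⟨0, ?_, by simp⟩
    unfold thetaNorm
    have hz : (⨅ θ : Θ, ∑ i, (0 : Fin d → ℝ) i ^ 2 / (θ : Fin d → ℝ) i) = 0 := by
      have he : (fun θ : Θ => ∑ i, (0 : Fin d → ℝ) i ^ 2 / (θ : Fin d → ℝ) i)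
          = fun _ : Θ => (0 : ℝ) := by
        funext θ; simp
      rw [he, ciInf_const]
    rw [hz, Real.sqrt_zero]
    norm_num
  -- upper bound: every element of the set is ≤ sqrt M
  have hub : ∀ x ∈ {x : ℝ | ∃ w : Fin d → ℝ, thetaNorm Θ w ≤ 1 ∧ x = ∑ i, u i * w i},
      x ≤ Real.sqrt M := by
    rintro x ⟨w, hw, rfl⟩
    set g : Θ → ℝ := fun θ => ∑ i, w i ^ 2 / (θ : Fin d → ℝ) i with hg
    have hgnn : ∀ θ : Θ, 0 ≤ g θ := fun θ =>
      Finset.sum_nonneg fun i _ => div_nonneg (sq_nonneg _) (hpos _ θ.2 i).le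
    have hinf_nn : 0 ≤ ⨅ θ : Θ, g θ := le_ciInf hgnn
    have hinf1 : (⨅ θ : Θ, g θ) ≤ 1 := by
      by_contra h
      push_neg at h
      have : (1 : ℝ) < Real.sqrt (⨅ θ : Θ, g θ) := by
        have := Real.sqrt_lt_sqrt (by norm_num) h
        simpa using this
      exact absurd hw (by unfold thetaNorm; linarith)
    -- Cauchy-Schwarz per θ
    have hCS : ∀ θ : Θ, (∑ i, u i * w i) ^ 2 ≤ f θ * g θ := by
      intro θ
      have key := Finset.sum_mul_sq_le_sq_mul_sq Finset.univ
        (fun i => u i * Real.sqrt ((θ : Fin d → ℝ) i))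
        (fun i => w i / Real.sqrt ((θ : Fin d → ℝ) i))
      have h1 : ∀ i : Fin d, u i * Real.sqrt ((θ : Fin d → ℝ) i) *
          (w i / Real.sqrt ((θ : Fin d → ℝ) i)) = u i * w i := by
        intro i
        have hs : Real.sqrt ((θ : Fin d → ℝ) i) ≠ 0 :=
          (Real.sqrt_pos.mpr (hpos _ θ.2 i)).ne'
        field_simp
      have h2 : ∀ i : Fin d, (u i * Real.sqrt ((θ : Fin d → ℝ) i)) ^ 2 =
          (θ : Fin d → ℝ) i * u i ^ 2 := by
        intro i
        rw [mul_pow, Real.sq_sqrt (hpos _ θ.2 i).le]; ring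
      have h3 : ∀ i : Fin d, (w i / Real.sqrt ((θ : Fin d → ℝ) i)) ^ 2 =
          w i ^ 2 / (θ : Fin d → ℝ) i := by
        intro i
        rw [div_pow, Real.sq_sqrt (hpos _ θ.2 i).le]
      simp only [h1, h2, h3] at key
      exact key
    have hx2 : (∑ i, u i * w i) ^ 2 ≤ M := by
      rcases eq_or_lt_of_le hMnn with hM0 | hM0
      · have θ₀ := Classical.arbitrary Θ
        have := hCS θ₀
        have hle0 : f θ₀ ≤ M := le_ciSup hfbdd θ₀
        have hfz : f θ₀ = 0 := le_antisymm (by linarith) (hfnn θ₀)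
        rw [hfz, zero_mul] at this
        linarith [sq_nonneg (∑ i, u i * w i)]
      · have hdiv : ∀ θ : Θ, (∑ i, u i * w i) ^ 2 / M ≤ g θ := by
          intro θ
          rw [div_le_iff₀ hM0]
          calc (∑ i, u i * w i) ^ 2 ≤ f θ * g θ := hCS θ
            _ ≤ M * g θ := mul_le_mul_of_nonneg_right (le_ciSup hfbdd θ) (hgnn θ)
            _ = g θ * M := mul_comm _ _
        have := le_ciInf hdiv
        have h2 : (∑ i, u i * w i) ^ 2 / M ≤ 1 := le_trans this hinf1
        rw [div_le_one hM0] at h2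
        exact h2
    calc (∑ i, u i * w i) ≤ |∑ i, u i * w i| := le_abs_self _
      _ = Real.sqrt ((∑ i, u i * w i) ^ 2) := (Real.sqrt_sq_eq_abs _).symm
      _ ≤ Real.sqrt M := Real.sqrt_le_sqrt hx2
  have hSne : {x : ℝ | ∃ w : Fin d → ℝ, thetaNorm Θ w ≤ 1 ∧ x = ∑ i, u i * w i}.Nonempty :=
    ⟨0, h0mem⟩
  have hSbdd : BddAbove {x : ℝ | ∃ w : Fin d → ℝ, thetaNorm Θ w ≤ 1 ∧ x = ∑ i, u i * w i} :=
    ⟨Real.sqrt M, hub⟩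
  set S : ℝ := sSup {x : ℝ | ∃ w : Fin d → ℝ, thetaNorm Θ w ≤ 1 ∧ x = ∑ i, u i * w i} with hS
  have hSnn : 0 ≤ S := le_csSup hSbdd h0mem
  refine le_antisymm (csSup_le hSne hub) ?_
  -- sqrt M ≤ S : show M ≤ S ^ 2
  have hMS : M ≤ S ^ 2 := by
    refine ciSup_le fun θ => ?_
    rcases eq_or_lt_of_le (hfnn θ) with hfz | hfp
    · rw [← hfz]; exact sq_nonneg _
    · set c : ℝ := Real.sqrt (f θ) with hc
      have hcpos : 0 < c := Real.sqrt_pos.mpr hfp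
      set w : Fin d → ℝ := fun i => (θ : Fin d → ℝ) i * u i / c with hwdef
      have hgθ : (∑ i, w i ^ 2 / (θ : Fin d → ℝ) i) = 1 := by
        have h1 : ∀ i : Fin d, w i ^ 2 / (θ : Fin d → ℝ) i =
            (θ : Fin d → ℝ) i * u i ^ 2 / c ^ 2 := by
          intro i
          have hp := (hpos _ θ.2 i).ne'
          simp only [hwdef]
          field_simp
        simp only [h1, ← Finset.sum_div]
        rw [hc, Real.sq_sqrt (hfnn θ)]
        exact div_self hfp.ne'
      have hwnorm : thetaNorm Θ w ≤ 1 := by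
        unfold thetaNorm
        have hle : (⨅ θ' : Θ, ∑ i, w i ^ 2 / (θ' : Fin d → ℝ) i) ≤ 1 := by
          calc (⨅ θ' : Θ, ∑ i, w i ^ 2 / (θ' : Fin d → ℝ) i)
              ≤ ∑ i, w i ^ 2 / (θ : Fin d → ℝ) i := ciInf_le (hgbdd w) θ
            _ = 1 := hgθ
        calc Real.sqrt _ ≤ Real.sqrt 1 := Real.sqrt_le_sqrt hle
          _ = 1 := Real.sqrt_one
      have hsum : (∑ i, u i * w i) = c := by
        have h1 : ∀ i : Fin d, u i * w i = (θ : Fin d → ℝ) i * u i ^ 2 / c := by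
          intro i; simp only [hwdef]; field_simp
        simp only [h1, ← Finset.sum_div]
        have h2 : c ^ 2 = ∑ i, (θ : Fin d → ℝ) i * u i ^ 2 := Real.sq_sqrt (hfnn θ)
        rw [← h2, sq, mul_div_assoc, div_self hcpos.ne', mul_one]
      have hcmem : c ∈ {x : ℝ | ∃ w : Fin d → ℝ, thetaNorm Θ w ≤ 1 ∧ x = ∑ i, u i * w i} :=
        ⟨w, hwnorm, hsum.symm⟩
      have hcS : c ≤ S := le_csSup hSbdd hcmem
      calc f θ = c ^ 2 := (Real.sq_sqrt (hfnn θ)).symm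
        _ ≤ S ^ 2 := pow_le_pow_left₀ hcpos.le hcS 2
  calc Real.sqrt M ≤ Real.sqrt (S ^ 2) := Real.sqrt_le_sqrt hMS
    _ = S := Real.sqrt_sq hSnn
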